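/- Let H be a Hilbert space, T : F(H) → F(H) a left centralizer of the finite-rank operators, and suppose T is bounded. Then there exists a bounded operator t ∈ B(H) with ‖t‖ ≤ ‖T‖ such that Tx = t∘x for all x ∈ F(H). -/

import Mathlib

open scoped ComplexOrder

noncomputable section

variable {H : Type*} [NormedAddCommGroup H] [InnerProductSpace ℂ H] [CompleteSpace H]

/-- The subspace `F(H)` of bounded finite-rank operators on `H`
(the Pedersen ideal of the C*-algebra `K(H)` of compact operators). -/
def FR (H : Type*) [NormedAddCommGroup H] [InnerProductSpace ℂ H] :
    Submodule ℂ (H →L[ℂ] H) where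
  carrier := {x | FiniteDimensional ℂ (LinearMap.range (x : H →ₗ[ℂ] H))}
  add_mem' := by
    intro a b ha hb
    simp only [Set.mem_setOf_eq] at *
    haveI := ha; haveI := hb
    haveI : FiniteDimensional ℂ
        ↥(LinearMap.range (a : H →ₗ[ℂ] H) ⊔ LinearMap.range (b : H →ₗ[ℂ] H)) :=
      Submodule.finiteDimensional_sup _ _
    exact Submodule.finiteDimensional_of_le
      (show LinearMap.range ((a + b : H →L[ℂ] H) : H →ₗ[ℂ] H) ≤
          LinearMap.range (a : H →ₗ[ℂ] H) ⊔ LinearMap.range (b : H →ₗ[ℂ] H) by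
        rintro x ⟨u, rfl⟩
        exact Submodule.mem_sup.2 ⟨a u, ⟨u, rfl⟩, b u, ⟨u, rfl⟩, by simp⟩)
  zero_mem' := by
    simp only [Set.mem_setOf_eq]
    exact Submodule.finiteDimensional_of_le (show _ ≤ (⊥ : Submodule ℂ H) by
      rintro x ⟨u, rfl⟩; simp)
  smul_mem' := by
    intro c a ha
    simp only [Set.mem_setOf_eq] at *
    haveI := ha
    exact Submodule.finiteDimensional_of_le
      (show LinearMap.range ((c • a : H →L[ℂ] H) : H →ₗ[ℂ] H) ≤
          LinearMap.range (a : H →ₗ[ℂ] H) by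
        rintro x ⟨u, rfl⟩
        exact ⟨c • u, by simp [map_smul]⟩)

/-- The rank-one operator `v ⊗ w̄ : u ↦ ⟨u, w⟩ v`. -/
noncomputable def rankOne (v w : H) : H →L[ℂ] H := (innerSL ℂ w).smulRight v

/-- `T` is a left centralizer of `F(H)`: it maps `F(H)` into `F(H)` and
`T(xy) = (Tx)y` for all `x, y ∈ F(H)`. -/
def IsLeftCentralizer (T : FR H →ₗ[ℂ] (H →L[ℂ] H)) : Prop :=
  (∀ x : FR H, T x ∈ FR H) ∧
  ∀ (x y : FR H) (h : (x : H →L[ℂ] H) * (y : H →L[ℂ] H) ∈ FR H),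
    T ⟨(x : H →L[ℂ] H) * (y : H →L[ℂ] H), h⟩ = T x * (y : H →L[ℂ] H)

lemma FR_mul_mem (x : FR H) (b : H →L[ℂ] H) : (x : H →L[ℂ] H) * b ∈ FR H := by
  haveI : FiniteDimensional ℂ (LinearMap.range ((x : H →L[ℂ] H) : H →ₗ[ℂ] H)) := x.2
  show FiniteDimensional ℂ (LinearMap.range (((x : H →L[ℂ] H) * b : H →L[ℂ] H) : H →ₗ[ℂ] H))
  exact Submodule.finiteDimensional_of_le
    (show _ ≤ LinearMap.range ((x : H →L[ℂ] H) : H →ₗ[ℂ] H) by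
      rintro u ⟨w, rfl⟩; exact ⟨b w, rfl⟩)

lemma rankOne_mem (v w : H) : rankOne v w ∈ FR H := by
  show FiniteDimensional ℂ (LinearMap.range ((rankOne v w : H →L[ℂ] H) : H →ₗ[ℂ] H))
  haveI : FiniteDimensional ℂ (ℂ ∙ v) := inferInstance
  exact Submodule.finiteDimensional_of_le
    (show _ ≤ (ℂ ∙ v) by
      rintro u ⟨z, rfl⟩
      exact Submodule.smul_mem _ _ (Submodule.mem_span_singleton_self v))

lemma rankOne_apply' (v w u : H) : rankOne v w u = (inner ℂ w u : ℂ) • v := rfl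

lemma proj_mem (K : Submodule ℂ H) [FiniteDimensional ℂ K] :
    K.subtypeL.comp (K.orthogonalProjectionOnto) ∈ FR H := by
  show FiniteDimensional ℂ
      (LinearMap.range ((K.subtypeL.comp (K.orthogonalProjectionOnto) : H →L[ℂ] H) : H →ₗ[ℂ] H))
  exact Submodule.finiteDimensional_of_le
    (show _ ≤ K by rintro u ⟨z, rfl⟩; exact (K.orthogonalProjectionOnto z).2)

lemma proj_fix (K : Submodule ℂ H) [FiniteDimensional ℂ K] {v : H} (hv : v ∈ K) :
    K.subtypeL.comp (K.orthogonalProjectionOnto) v = v := by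
  exact Submodule.starProjection_eq_self_iff.mpr hv

open scoped Classical in
/-- Auxiliary map: candidate for `t v`. -/
noncomputable def tfun (T : FR H →ₗ[ℂ] (H →L[ℂ] H)) (v : H) : H :=
  if h : v = 0 then 0
  else T ⟨rankOne ((‖v‖ : ℂ)⁻¹ • v) ((‖v‖ : ℂ)⁻¹ • v), rankOne_mem _ _⟩ v

lemma tfun_spec (T : FR H →ₗ[ℂ] (H →L[ℂ] H)) (hT : IsLeftCentralizer T)
    (y : FR H) (v : H) (hy : (y : H →L[ℂ] H) v = v) : tfun T v = (T y) v := by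
  by_cases h : v = 0
  · simp [tfun, h]
  · have hv : (‖v‖ : ℂ) ≠ 0 := by
      simpa using norm_ne_zero_iff.mpr h
    set e : H := (‖v‖ : ℂ)⁻¹ • v with he
    have hye : (y : H →L[ℂ] H) e = e := by
      rw [he, map_smul, hy]
    have hpv : rankOne e e v = v := by
      rw [rankOne_apply', he, inner_smul_left, inner_self_eq_norm_sq_to_K, smul_smul]
      trans (1 : ℂ) • v
      · congr 1
        rw [map_inv₀, Complex.conj_ofReal]
        field_simp
        try ring
        rfl
      · rw [one_smul]
    have hmul : (y : H →L[ℂ] H) * rankOne e e = rankOne e e := by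
      ext u
      simp only [ContinuousLinearMap.mul_apply, rankOne_apply', map_smul, hye]
    have hmem : (y : H →L[ℂ] H) * ((⟨rankOne e e, rankOne_mem e e⟩ : FR H) : H →L[ℂ] H)
        ∈ FR H := FR_mul_mem y _
    have := hT.2 y ⟨rankOne e e, rankOne_mem e e⟩ hmem
    have heq : (⟨(y : H →L[ℂ] H) * rankOne e e, hmem⟩ : FR H)
        = ⟨rankOne e e, rankOne_mem e e⟩ := Subtype.ext hmul
    rw [heq] at this
    have : T ⟨rankOne e e, rankOne_mem e e⟩ v = (T y) (rankOne e e v) := by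
      rw [this]; rfl
    rw [hpv] at this
    simpa [tfun, h] using this

lemma tfun_add (T : FR H →ₗ[ℂ] (H →L[ℂ] H)) (hT : IsLeftCentralizer T) (v w : H) :
    tfun T (v + w) = tfun T v + tfun T w := by
  set K : Submodule ℂ H := Submodule.span ℂ {v, w} with hK
  haveI : FiniteDimensional ℂ K :=
    FiniteDimensional.span_of_finite ℂ (Set.toFinite _)
  set P : FR H := ⟨K.subtypeL.comp (K.orthogonalProjectionOnto), proj_mem K⟩ with hP
  have hvK : v ∈ K := Submodule.subset_span (by simp)
  have hwK : w ∈ K := Submodule.subset_span (by simp)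
  have h1 : tfun T v = (T P) v := tfun_spec T hT P v (proj_fix K hvK)
  have h2 : tfun T w = (T P) w := tfun_spec T hT P w (proj_fix K hwK)
  have h3 : tfun T (v + w) = (T P) (v + w) :=
    tfun_spec T hT P (v + w) (proj_fix K (K.add_mem hvK hwK))
  rw [h1, h2, h3, map_add]

lemma tfun_smul (T : FR H →ₗ[ℂ] (H →L[ℂ] H)) (hT : IsLeftCentralizer T) (c : ℂ) (v : H) :
    tfun T (c • v) = c • tfun T v := by
  set K : Submodule ℂ H := ℂ ∙ v with hK
  haveI : FiniteDimensional ℂ K := inferInstance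
  set P : FR H := ⟨K.subtypeL.comp (K.orthogonalProjectionOnto), proj_mem K⟩ with hP
  have hvK : v ∈ K := Submodule.mem_span_singleton_self v
  have h1 : tfun T v = (T P) v := tfun_spec T hT P v (proj_fix K hvK)
  have h2 : tfun T (c • v) = (T P) (c • v) :=
    tfun_spec T hT P (c • v) (proj_fix K (K.smul_mem c hvK))
  rw [h1, h2, map_smul]

lemma tfun_bound (T : FR H →ₗ[ℂ] (H →L[ℂ] H))
    (C : ℝ) (hC0 : 0 ≤ C) (hC : ∀ x : FR H, ‖T x‖ ≤ C * ‖x‖) (v : H) :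
    ‖tfun T v‖ ≤ C * ‖v‖ := by
  by_cases h : v = 0
  · simp [tfun, h]
  · have hv : ‖v‖ ≠ 0 := norm_ne_zero_iff.mpr h
    set e : H := (‖v‖ : ℂ)⁻¹ • v with he
    have hne : ‖e‖ = 1 := by
      rw [he, norm_smul]
      simp [hv]
    have hnorm : ‖rankOne e e‖ ≤ 1 := by
      refine ContinuousLinearMap.opNorm_le_bound _ zero_le_one fun u => ?_
      rw [rankOne_apply', norm_smul, one_mul]
      calc ‖(inner ℂ e u : ℂ)‖ * ‖e‖ ≤ ‖e‖ * ‖u‖ * ‖e‖ := by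
            gcongr; exact norm_inner_le_norm e u
        _ = ‖u‖ := by rw [hne]; ring
    have key : tfun T v = T ⟨rankOne e e, rankOne_mem e e⟩ v := by
      simp [tfun, h, he]
    rw [key]
    calc ‖T ⟨rankOne e e, rankOne_mem e e⟩ v‖
        ≤ ‖T ⟨rankOne e e, rankOne_mem e e⟩‖ * ‖v‖ :=
          ContinuousLinearMap.le_opNorm _ v
      _ ≤ (C * ‖(⟨rankOne e e, rankOne_mem e e⟩ : FR H)‖) * ‖v‖ := by
          gcongr; exact hC _
      _ ≤ (C * 1) * ‖v‖ := by
          have hn : ‖(⟨rankOne e e, rankOne_mem e e⟩ : FR H)‖ = ‖rankOne e e‖ := rfl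
          exact mul_le_mul_of_nonneg_right
            (mul_le_mul_of_nonneg_left (hn ▸ hnorm) hC0) (norm_nonneg v)
      _ = C * ‖v‖ := by ring

/-- a bounded left centralizer `T` of `F(H)` is given by left multiplication
by a bounded operator `t ∈ B(H)` with `‖t‖ ≤ ‖T‖`. -/
theorem stmt_18 (T : FR H →ₗ[ℂ] (H →L[ℂ] H)) (hT : IsLeftCentralizer T)
    (C : ℝ) (hC0 : 0 ≤ C) (hC : ∀ x : FR H, ‖T x‖ ≤ C * ‖x‖) :
    ∃ t : H →L[ℂ] H, ‖t‖ ≤ C ∧ ∀ x : FR H, T x = t * (x : H →L[ℂ] H) := by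
  set tl : H →ₗ[ℂ] H :=
    { toFun := tfun T
      map_add' := tfun_add T hT
      map_smul' := tfun_smul T hT } with htl
  set t : H →L[ℂ] H := LinearMap.mkContinuous tl C (tfun_bound T C hC0 hC) with ht
  refine ⟨t, LinearMap.mkContinuous_norm_le tl hC0 _, fun x => ?_⟩
  ext u
  haveI : FiniteDimensional ℂ (LinearMap.range ((x : H →L[ℂ] H) : H →ₗ[ℂ] H)) := x.2
  set K : Submodule ℂ H := LinearMap.range ((x : H →L[ℂ] H) : H →ₗ[ℂ] H) with hK
  set P : FR H := ⟨K.subtypeL.comp (K.orthogonalProjectionOnto), proj_mem K⟩ with hP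
  have hxu : (x : H →L[ℂ] H) u ∈ K := ⟨u, rfl⟩
  have hPx : (P : H →L[ℂ] H) ((x : H →L[ℂ] H) u) = (x : H →L[ℂ] H) u :=
    proj_fix K hxu
  have hmem : (P : H →L[ℂ] H) * (x : H →L[ℂ] H) ∈ FR H := FR_mul_mem P _
  have hmul : (P : H →L[ℂ] H) * (x : H →L[ℂ] H) = (x : H →L[ℂ] H) := by
    ext w
    exact proj_fix K ⟨w, rfl⟩
  have hc := hT.2 P x hmem
  have heq : (⟨(P : H →L[ℂ] H) * (x : H →L[ℂ] H), hmem⟩ : FR H) = x :=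
    Subtype.ext hmul
  rw [heq] at hc
  have h1 : (T x) u = (T P) ((x : H →L[ℂ] H) u) := by
    rw [hc]; rfl
  have h2 : (t * (x : H →L[ℂ] H)) u = tfun T ((x : H →L[ℂ] H) u) := rfl
  rw [h1, h2, tfun_spec T hT P _ hPx]
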